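/- The quartic curve c²(b²x² + a²y²)² − b⁴a²((a² − 2b²)x² − a²y²) = 0 passes through the points (±a√(a² − 2b²)/c, 0), which are the vertices of the hyperbola x²/a''² − y²/b''² = 1 with a'' = a√(a² − 2b²)/c, b'' = b²/c, and the curve is tangent to this hyperbola at those points (their tangent lines there coincide, being vertical). -/

import Mathlib

private lemma d024 (A B C : ℝ) :
    deriv (fun y : ℝ => A + B*y^2 + C*y^4) 0 = 0 := by
  have h : HasDerivAt (fun y : ℝ => A + B*y^2 + C*y^4)
      (B*(2*(0:ℝ)^1) + C*(4*(0:ℝ)^3)) 0 := by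
    simpa [add_assoc, Pi.add_def] using ((hasDerivAt_const (0:ℝ) A).add
      (((hasDerivAt_pow 2 (0:ℝ)).const_mul B).add
        ((hasDerivAt_pow 4 (0:ℝ)).const_mul C)))
  simpa using h.deriv

private lemma d24 (A B C : ℝ) (t : ℝ) :
    deriv (fun x : ℝ => A + B*x^2 + C*x^4) t = 2*B*t + 4*C*t^3 := by
  have h : HasDerivAt (fun x : ℝ => A + B*x^2 + C*x^4)
      (B*(2*t^1) + C*(4*t^3)) t := by
    simpa [add_assoc, Pi.add_def] using ((hasDerivAt_const t A).add
      (((hasDerivAt_pow 2 t).const_mul B).add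
        ((hasDerivAt_pow 4 t).const_mul C)))
  rw [h.deriv]; ring

private lemma d02 (A B : ℝ) (t : ℝ) :
    deriv (fun x : ℝ => A + B*x^2) t = 2*B*t := by
  have h : HasDerivAt (fun x : ℝ => A + B*x^2) (B*(2*t^1)) t := by
    simpa [Pi.add_def] using ((hasDerivAt_const t A).add ((hasDerivAt_pow 2 t).const_mul B))
  rw [h.deriv]; ring

/-- The quartic locus of midpoints passes through the vertices
`(±a√(a²−2b²)/c, 0)` of the confocal hyperbolic caustic, and both curves have a
vertical tangent line there (the partial derivative in `y` vanishes while the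
partial derivative in `x` does not, for both curves), so they are tangent at
those points. -/
theorem quartic_tangent_to_caustic_at_vertices
    (a b c : ℝ) (hab : a > b) (hb : b > 0) (h2 : a^2 > 2*b^2)
    (hc : c > 0) (hc2 : c^2 = a^2 - b^2) :
    let v : ℝ := a * Real.sqrt (a^2 - 2*b^2) / c
    let a'' : ℝ := a * Real.sqrt (a^2 - 2*b^2) / c
    let b'' : ℝ := b^2 / c
    let F : ℝ → ℝ → ℝ := fun x y =>
      c^2*(b^2*x^2 + a^2*y^2)^2 - b^4*a^2*((a^2 - 2*b^2)*x^2 - a^2*y^2)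
    let G : ℝ → ℝ → ℝ := fun x y => x^2/a''^2 - y^2/b''^2 - 1
    ∀ ε : ℝ, ε = 1 ∨ ε = -1 →
      -- both curves pass through the hyperbola vertex (ε·v, 0)
      (F (ε*v) 0 = 0 ∧ G (ε*v) 0 = 0) ∧
      -- both have vertical tangent there: ∂/∂y vanishes, ∂/∂x does not
      (deriv (fun y => F (ε*v) y) 0 = 0 ∧ deriv (fun x => F x 0) (ε*v) ≠ 0) ∧
      (deriv (fun y => G (ε*v) y) 0 = 0 ∧ deriv (fun x => G x 0) (ε*v) ≠ 0) := by
  intro v a'' b'' F G ε hε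
  have ha : a > 0 := lt_trans hb hab
  have hcne : c ≠ 0 := ne_of_gt hc
  set s : ℝ := Real.sqrt (a^2 - 2*b^2) with hs
  have hs2 : s^2 = a^2 - 2*b^2 := Real.sq_sqrt (by nlinarith)
  have hspos : s > 0 := Real.sqrt_pos.mpr (by nlinarith)
  have hvdef : v = a * s / c := rfl
  have hvpos : v > 0 := by rw [hvdef]; positivity
  have hv2 : v^2 = a^2 * (a^2 - 2*b^2) / c^2 := by
    rw [hvdef, div_pow, mul_pow, hs2]
  have hε2 : ε^2 = 1 := by rcases hε with h | h <;> simp [h]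
  have hεne : ε ≠ 0 := by rcases hε with h | h <;> simp [h]
  have hx2 : (ε*v)^2 = a^2 * (a^2 - 2*b^2) / c^2 := by
    rw [mul_pow, hε2, one_mul, hv2]
  have ha''v : a'' = v := rfl
  refine ⟨⟨?_, ?_⟩, ⟨?_, ?_⟩, ?_, ?_⟩
  · show c^2*(b^2*(ε*v)^2 + a^2*(0:ℝ)^2)^2
      - b^4*a^2*((a^2 - 2*b^2)*(ε*v)^2 - a^2*(0:ℝ)^2) = 0
    rw [hx2]; field_simp; ring
  · show (ε*v)^2/a''^2 - (0:ℝ)^2/b''^2 - 1 = 0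
    rw [ha''v, mul_pow, hε2, one_mul]
    have : v^2 ≠ 0 := by positivity
    field_simp
    simp
  · show deriv (fun y => c^2*(b^2*(ε*v)^2 + a^2*y^2)^2
      - b^4*a^2*((a^2 - 2*b^2)*(ε*v)^2 - a^2*y^2)) 0 = 0
    have hfun : (fun y : ℝ => c^2*(b^2*(ε*v)^2 + a^2*y^2)^2
        - b^4*a^2*((a^2 - 2*b^2)*(ε*v)^2 - a^2*y^2))
        = fun y : ℝ => (c^2*(b^2*(ε*v)^2)^2 - b^4*a^2*(a^2 - 2*b^2)*(ε*v)^2)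
          + (2*c^2*b^2*(ε*v)^2*a^2 + b^4*a^2*a^2)*y^2 + (c^2*a^4)*y^4 := by
      funext y; ring
    rw [hfun]; exact d024 _ _ _
  · show deriv (fun x => c^2*(b^2*x^2 + a^2*(0:ℝ)^2)^2
      - b^4*a^2*((a^2 - 2*b^2)*x^2 - a^2*(0:ℝ)^2)) (ε*v) ≠ 0
    have hfun : (fun x : ℝ => c^2*(b^2*x^2 + a^2*(0:ℝ)^2)^2
        - b^4*a^2*((a^2 - 2*b^2)*x^2 - a^2*(0:ℝ)^2))
        = fun x : ℝ => (0:ℝ) + (-(b^4*a^2*(a^2 - 2*b^2)))*x^2 + (c^2*b^4)*x^4 := by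
      funext x; ring
    rw [hfun, d24]
    have hval : 2*(-(b^4*a^2*(a^2 - 2*b^2)))*(ε*v) + 4*(c^2*b^4)*(ε*v)^3
        = ε*v*(2*b^4*a^2*(a^2 - 2*b^2)) := by
      have : (ε*v)^3 = (ε*v) * ((ε*v)^2) := by ring
      rw [this, hx2]; field_simp; ring
    rw [hval]
    have hd : a^2 - 2*b^2 > 0 := by linarith
    have h1 : (2:ℝ)*b^4*a^2*(a^2 - 2*b^2) > 0 := by positivity
    rcases hε with h | h <;> rw [h]
    · exact ne_of_gt (by nlinarith)
    · exact ne_of_lt (by nlinarith)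
  · show deriv (fun y => (ε*v)^2/a''^2 - y^2/b''^2 - 1) 0 = 0
    have hfun : (fun y : ℝ => (ε*v)^2/a''^2 - y^2/b''^2 - 1)
        = fun y : ℝ => ((ε*v)^2/a''^2 - 1) + (-(1/b''^2))*y^2 := by
      funext y; ring
    rw [hfun, d02]; ring
  · show deriv (fun x => x^2/a''^2 - (0:ℝ)^2/b''^2 - 1) (ε*v) ≠ 0
    have hfun : (fun x : ℝ => x^2/a''^2 - (0:ℝ)^2/b''^2 - 1)
        = fun x : ℝ => (-(0:ℝ)^2/b''^2 - 1) + (1/a''^2)*x^2 := by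
      funext x; ring
    rw [hfun, d02, ha''v]
    have hv2ne : v^2 > 0 := by positivity
    have hkey : (2:ℝ)*(1/v^2)*v > 0 := by positivity
    rcases hε with h | h <;> rw [h]
    · exact ne_of_gt (by nlinarith)
    · exact ne_of_lt (by nlinarith)
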